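/- The number of rooted ternary trees with n internal nodes, i.e., the Fuss-Catalan number (1/(2n+1))*binomial(3n,n), satisfies the recurrence obtained from S = z(1+S)^3, namely a_0 = 1 and a_{n} = sum over i+j+k = n-1 of a_i * a_j * a_k, where a_n = (1/(2n+1))*binomial(3n,n). -/

import Mathlib

/-- Number of forests of `p` ternary trees with `n` total internal nodes (as a rational). -/
def fc : ℕ → ℕ → ℚ
  | _, 0 => 1
  | 0, _+1 => 0
  | p+1, n+1 => fc p (n+1) + fc (p+3) n
termination_by p n => (n, p)

lemma fc_zero_left (n : ℕ) : fc 0 (n+1) = 0 := by simp [fc]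

lemma fc_zero_right (p : ℕ) : fc p 0 = 1 := by cases p <;> simp [fc]

lemma fc_succ (p n : ℕ) : fc (p+1) (n+1) = fc p (n+1) + fc (p+3) n := by
  simp [fc]

lemma fact_cast (m : ℕ) : (((m+1).factorial : ℚ)) = (m+1) * m.factorial := by
  push_cast [Nat.factorial_succ]; ring

lemma fact_ne (m : ℕ) : ((m.factorial : ℚ)) ≠ 0 := by
  exact_mod_cast m.factorial_ne_zero

lemma fc_closed (n : ℕ) : ∀ p : ℕ,
    fc (p+1) n = ((p:ℚ)+1) * (3*n+p).factorial / (n.factorial * (2*n+p+1).factorial) := by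
  induction n with
  | zero =>
    intro p
    rw [fc_zero_right]
    simp only [Nat.mul_zero, Nat.zero_add, Nat.factorial_zero]
    rw [fact_cast]
    have := fact_ne p
    field_simp
    simp
  | succ n ih =>
    intro p
    have Fe : ∀ m : ℕ, ((m+1).factorial : ℚ) = (m+1) * m.factorial := fact_cast
    induction p with
    | zero =>
      rw [fc_succ, fc_zero_left, ih 2]
      have F1 : ((3*(n+1)+0).factorial : ℚ) = (3*n+3) * (3*n+2).factorial := by
        rw [show 3*(n+1)+0 = (3*n+2)+1 from by ring, Fe]; push_cast; ring
      have F2 : ((2*(n+1)+0+1).factorial : ℚ) = (2*n+3) * (2*n+2).factorial := by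
        rw [show 2*(n+1)+0+1 = (2*n+2)+1 from by ring, Fe]; push_cast; ring
      have F3 : ((2*n+2+1).factorial : ℚ) = (2*n+3) * (2*n+2).factorial := by
        rw [show 2*n+2+1 = (2*n+2)+1 from by ring, Fe]; push_cast; ring
      have F4 : (((n+1)).factorial : ℚ) = (n+1) * n.factorial := Fe n
      rw [F1, F2, F3, F4]
      have h1 := fact_ne n
      have h2 := fact_ne (3*n+2)
      have h3 := fact_ne (2*n+2)
      push_cast
      field_simp
      ring
    | succ s ihs =>
      rw [fc_succ, ihs, ih (s+3)]
      have F1 : ((3*(n+1)+(s+1)).factorial : ℚ)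
          = (3*n+s+4) * ((3*n+s+3) * (3*n+s+2).factorial) := by
        rw [show 3*(n+1)+(s+1) = ((3*n+s+2)+1)+1 from by ring, Fe, Fe]; push_cast; ring
      have F2 : ((3*(n+1)+s).factorial : ℚ) = (3*n+s+3) * (3*n+s+2).factorial := by
        rw [show 3*(n+1)+s = (3*n+s+2)+1 from by ring, Fe]; push_cast; ring
      have F3 : ((3*n+(s+3)).factorial : ℚ) = (3*n+s+3) * (3*n+s+2).factorial := by
        rw [show 3*n+(s+3) = (3*n+s+2)+1 from by ring, Fe]; push_cast; ring
      have F4 : ((2*(n+1)+(s+1)+1).factorial : ℚ)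
          = (2*n+s+4) * ((2*n+s+3) * (2*n+s+2).factorial) := by
        rw [show 2*(n+1)+(s+1)+1 = ((2*n+s+2)+1)+1 from by ring, Fe, Fe]; push_cast; ring
      have F5 : ((2*(n+1)+s+1).factorial : ℚ) = (2*n+s+3) * (2*n+s+2).factorial := by
        rw [show 2*(n+1)+s+1 = (2*n+s+2)+1 from by ring, Fe]; push_cast; ring
      have F6 : ((2*n+(s+3)+1).factorial : ℚ)
          = (2*n+s+4) * ((2*n+s+3) * (2*n+s+2).factorial) := by
        rw [show 2*n+(s+3)+1 = ((2*n+s+2)+1)+1 from by ring, Fe, Fe]; push_cast; ring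
      have F7 : (((n+1)).factorial : ℚ) = (n+1) * n.factorial := Fe n
      rw [F1, F2, F3, F4, F5, F6, F7]
      have h1 := fact_ne n
      have h2 := fact_ne (3*n+s+2)
      have h3 := fact_ne (2*n+s+2)
      push_cast
      field_simp
      ring

lemma fc_conv (n : ℕ) : ∀ p q : ℕ,
    ∑ i ∈ Finset.range (n+1), fc p i * fc q (n - i) = fc (p+q) n := by
  induction n with
  | zero =>
    intro p q
    simp [fc_zero_right]
  | succ n ih =>
    intro p q
    induction p with
    | zero =>
      rw [Finset.sum_range_succ']
      simp [fc_zero_left, fc_zero_right]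
    | succ s ihs =>
      have key : ∀ i, fc (s+1) (i+1) * fc q (n+1-(i+1)) =
          fc s (i+1) * fc q (n-i) + fc (s+3) i * fc q (n-i) := fun i => by
        rw [fc_succ, add_mul, Nat.add_sub_add_right]
      rw [Finset.sum_range_succ']
      simp only [key]
      rw [Finset.sum_add_distrib, ih (s+3) q]
      have expand := Finset.sum_range_succ' (fun i => fc s i * fc q (n+1-i)) (n+1)
      have hsq : fc (s+1+q) (n+1) = fc (s+q) (n+1) + fc (s+q+3) n := by
        rw [show s+1+q = (s+q)+1 from by ring]; exact fc_succ _ _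
      rw [hsq, ← ihs, expand, show s+3+q = s+q+3 from by ring]
      simp only [Nat.add_sub_add_right, Nat.sub_zero, fc_zero_right]
      ring

lemma a_eq_fc (n : ℕ) : (Nat.choose (3*n) n : ℚ) / (2*n+1) = fc 1 n := by
  have h := fc_closed n 0
  have hc := Nat.choose_mul_factorial_mul_factorial (show n ≤ 3*n by omega)
  rw [show 3*n - n = 2*n by omega] at hc
  have hfact : ((2*n+1).factorial : ℚ) = (2*n+1) * (2*n).factorial := by
    rw [fact_cast (2*n)]; push_cast; ring
  rw [show (0:ℕ)+1 = 1 from rfl] at h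
  rw [h, show 3*n+0 = 3*n by ring, show 2*n+0+1 = 2*n+1 by ring, hfact]
  have h1 := fact_ne n
  have h2 := fact_ne (2*n)
  have h3 : ((2*n : ℚ)+1) ≠ 0 := by positivity
  have hC : ((3*n).factorial : ℚ) = (Nat.choose (3*n) n : ℚ) * n.factorial * (2*n).factorial := by
    exact_mod_cast congrArg (Nat.cast (R := ℚ)) hc.symm
  rw [hC]
  push_cast
  field_simp
  ring

theorem fuss_catalan_recurrence (a : ℕ → ℚ)
    (ha : ∀ n : ℕ, a n = (Nat.choose (3 * n) n : ℚ) / (2 * n + 1)) :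
    a 0 = 1 ∧
    ∀ n : ℕ, 1 ≤ n →
      a n = ∑ p ∈ Finset.HasAntidiagonal.antidiagonal (n - 1),
              a p.1 * ∑ q ∈ Finset.HasAntidiagonal.antidiagonal p.2, a q.1 * a q.2 := by
  have haf : ∀ k, a k = fc 1 k := by
    intro k; rw [ha k, ← a_eq_fc k]
  constructor
  · rw [haf 0, fc_zero_right]
  · intro n hn
    obtain ⟨m, rfl⟩ : ∃ m, n = m + 1 := ⟨n - 1, by omega⟩
    simp only [haf, Nat.add_sub_cancel]
    rw [Finset.Nat.sum_antidiagonal_eq_sum_range_succ_mk]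
    have inner : ∀ k : ℕ,
        (∑ q ∈ Finset.HasAntidiagonal.antidiagonal k, fc 1 q.1 * fc 1 q.2) = fc 2 k := by
      intro k
      rw [Finset.Nat.sum_antidiagonal_eq_sum_range_succ_mk]
      exact fc_conv k 1 1
    simp only [inner]
    calc fc 1 (m+1) = fc 0 (m+1) + fc 3 m := fc_succ 0 m
      _ = fc 3 m := by rw [fc_zero_left, zero_add]
      _ = ∑ i ∈ Finset.range (m+1), fc 1 i * fc 2 (m - i) := (fc_conv m 1 2).symm
      _ = ∑ x ∈ Finset.range (m+1), fc 1 x * fc 2 (m - x) := rfl
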